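/- Fix \(a > 0\), \(T > 0\), and let \(f : \mathbb{R} \to \mathbb{R}\) be a continuously differentiable function with bounded derivative such that \(C_0 := \sup_{x \in \mathbb{R}} (1+x^2)^a\, |f(x)| < \infty\). Then there exists a constant \(C_1 > 0\), depending only on a, T, and \(C_0\), such that for all \(0 < t \le T\) and all \(x \in \mathbb{R}\): \(|(H_t * f)(x)| \le \dfrac{C_1}{(1+x^2)^a}\) and \(|(H_t * f')(x)| \le \dfrac{C_1}{\sqrt{t}\,(1+x^2)^a}\). -/

import Mathlib

open MeasureTheory Real


lemma aux_poly_exp (a T : ℝ) (ha : 0 < a) (hT : 0 < T) :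
    ∃ M : ℝ, 1 ≤ M ∧ ∀ x : ℝ, (1 + x ^ 2) ^ a ≤ M * Real.exp (x ^ 2 / (64 * T)) := by
  set n : ℕ := ⌈a⌉₊ with hn
  have hn1 : 1 ≤ n := Nat.one_le_ceil_iff.mpr ha
  set c : ℝ := max 1 (64 * T * n) with hc
  refine ⟨c ^ n, one_le_pow₀ (le_max_left _ _), fun x => ?_⟩
  have h1x : (1 : ℝ) ≤ 1 + x ^ 2 := by nlinarith [sq_nonneg x]
  have step1 : (1 + x ^ 2) ^ a ≤ (1 + x ^ 2) ^ (n : ℝ) :=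
    Real.rpow_le_rpow_of_exponent_le h1x (Nat.le_ceil a)
  rw [Real.rpow_natCast] at step1
  refine step1.trans ?_
  have hu : 0 ≤ x ^ 2 / (64 * T * n) := by positivity
  have hbase : 1 + x ^ 2 ≤ c * Real.exp (x ^ 2 / (64 * T * n)) := by
    have he : x ^ 2 / (64 * T * n) + 1 ≤ Real.exp (x ^ 2 / (64 * T * n)) :=
      Real.add_one_le_exp _
    have hc1 : (1 : ℝ) ≤ c := le_max_left _ _
    have hc2 : 64 * T * n ≤ c := le_max_right _ _
    have hTn : (0 : ℝ) < 64 * T * n := by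
      have : (0:ℝ) < (n:ℝ) := by exact_mod_cast Nat.pos_of_ne_zero (by omega)
      positivity
    have : x ^ 2 ≤ c * (x ^ 2 / (64 * T * n)) := by
      rw [mul_div_assoc'] ; rw [le_div_iff₀ hTn] ; nlinarith [sq_nonneg x]
    nlinarith [Real.exp_pos (x ^ 2 / (64 * T * n))]
  calc (1 + x ^ 2) ^ n ≤ (c * Real.exp (x ^ 2 / (64 * T * n))) ^ n := by
        apply pow_le_pow_left₀ (by positivity) hbase
    _ = c ^ n * Real.exp (x ^ 2 / (64 * T)) := by
        rw [mul_pow, ← Real.exp_nat_mul]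
        congr 2
        field_simp

lemma gauss_integrable (d x : ℝ) (hd : 0 < d) :
    Integrable (fun z : ℝ => Real.exp (-(x - z) ^ 2 / d)) := by
  have h := (integrable_exp_neg_mul_sq (show 0 < d⁻¹ by positivity)).comp_sub_right x
  exact h.congr (Filter.Eventually.of_forall fun z => by
    show Real.exp (-d⁻¹ * (z - x) ^ 2) = Real.exp (-(x - z) ^ 2 / d)
    rw [div_eq_mul_inv]; ring_nf)

lemma gauss_integral (d x : ℝ) (hd : 0 < d) :
    ∫ z : ℝ, Real.exp (-(x - z) ^ 2 / d) = Real.sqrt (Real.pi * d) := by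
  have h : ∀ z : ℝ, Real.exp (-(x - z) ^ 2 / d) = Real.exp (-d⁻¹ * (x - z) ^ 2) := by
    intro z; rw [div_eq_mul_inv]; ring_nf
  simp_rw [h]
  rw [integral_sub_left_eq_self (fun y => Real.exp (-d⁻¹ * y ^ 2)) volume x,
    integral_gaussian, div_inv_eq_mul]

lemma weight_pos (b : ℝ) (x : ℝ) : (0 : ℝ) < (1 + x ^ 2) ^ b := by
  have : (0:ℝ) < 1 + x ^ 2 := by positivity
  positivity

lemma weight_le_one (a x : ℝ) (ha : 0 < a) : (1 + x ^ 2 : ℝ) ^ (-a) ≤ 1 :=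
  Real.rpow_le_one_of_one_le_of_nonpos (by nlinarith [sq_nonneg x]) (by linarith)

lemma aux_key (a T M : ℝ) (ha : 0 < a) (hT : 0 < T) (hM : 1 ≤ M)
    (hMx : ∀ x : ℝ, (1 + x ^ 2) ^ a ≤ M * Real.exp (x ^ 2 / (64 * T)))
    (t x : ℝ) (ht : 0 < t) (htT : t ≤ T) :
    ∫ z : ℝ, Real.exp (-(x - z) ^ 2 / (8 * t)) * (1 + z ^ 2) ^ (-a)
      ≤ ((4:ℝ) ^ a * Real.sqrt (8 * Real.pi) + M * Real.sqrt (16 * Real.pi)) *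
        Real.sqrt t * (1 + x ^ 2) ^ (-a) := by
  set w : ℝ → ℝ := fun y => (1 + y ^ 2) ^ (-a) with hw
  have hwpos : ∀ y, 0 < w y := fun y => weight_pos _ _
  set h : ℝ → ℝ := fun z =>
    ((4:ℝ) ^ a * Real.exp (-(x - z) ^ 2 / (8 * t)) +
      M * Real.exp (-(x - z) ^ 2 / (16 * t))) * w x with hh
  have hint8 := gauss_integrable (8 * t) x (by positivity)
  have hint16 := gauss_integrable (16 * t) x (by positivity)
  have hinth : Integrable h := (((hint8.const_mul _).add (hint16.const_mul _)).mul_const _)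
  have hpt : ∀ z, Real.exp (-(x - z) ^ 2 / (8 * t)) * w z ≤ h z := by
    intro z
    by_cases hcase : (x - z) ^ 2 ≤ x ^ 2 / 4
    · -- near region
      have hxz : 1 + x ^ 2 ≤ 4 * (1 + z ^ 2) := by nlinarith [sq_nonneg (x - 2 * z)]
      have h1 : (1 + x ^ 2) ^ a ≤ (4:ℝ) ^ a * (1 + z ^ 2) ^ a := by
        have := Real.rpow_le_rpow (by positivity) hxz ha.le
        rwa [Real.mul_rpow (by norm_num) (by positivity)] at this
      have h2 : w z ≤ (4:ℝ) ^ a * w x := by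
        have key : (4 * (1 + z ^ 2) : ℝ) ^ (-a) ≤ (1 + x ^ 2) ^ (-a) :=
          Real.rpow_le_rpow_of_nonpos (by positivity) hxz (by linarith)
        rw [Real.mul_rpow (by norm_num) (by positivity)] at key
        have h4 : (4:ℝ) ^ a * (4:ℝ) ^ (-a) = 1 := by
          rw [← Real.rpow_add (by norm_num)]; simp
        have : w z = (4:ℝ) ^ a * ((4:ℝ) ^ (-a) * (1 + z ^ 2) ^ (-a)) := by
          rw [hw, ← mul_assoc, h4, one_mul]
        rw [this, hw]
        exact mul_le_mul_of_nonneg_left key (by positivity)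
      have hexp : (0:ℝ) ≤ Real.exp (-(x - z) ^ 2 / (8 * t)) := (Real.exp_pos _).le
      calc Real.exp (-(x - z) ^ 2 / (8 * t)) * w z
          ≤ Real.exp (-(x - z) ^ 2 / (8 * t)) * ((4:ℝ) ^ a * w x) :=
            mul_le_mul_of_nonneg_left h2 hexp
        _ ≤ h z := by
            rw [hh]
            have : (0:ℝ) ≤ M * Real.exp (-(x - z) ^ 2 / (16 * t)) * w x := by
              have := (hwpos x).le; positivity
            nlinarith [this]
    · -- far region
      push_neg at hcase
      have hsplit : Real.exp (-(x - z) ^ 2 / (8 * t)) =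
          Real.exp (-(x - z) ^ 2 / (16 * t)) * Real.exp (-(x - z) ^ 2 / (16 * t)) := by
        rw [← Real.exp_add]; congr 1; field_simp; ring
      have hfar : Real.exp (-(x - z) ^ 2 / (16 * t)) ≤ Real.exp (-x ^ 2 / (64 * t)) := by
        apply Real.exp_le_exp.mpr
        rw [div_le_div_iff₀ (by positivity) (by positivity)]
        nlinarith
      have htle : Real.exp (-x ^ 2 / (64 * t)) ≤ Real.exp (-x ^ 2 / (64 * T)) := by
        apply Real.exp_le_exp.mpr
        rw [neg_div, neg_div, neg_le_neg_iff]
        gcongr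
      have hMw : Real.exp (-x ^ 2 / (64 * T)) ≤ M * w x := by
        rw [neg_div, Real.exp_neg, hw]
        show (Real.exp (x ^ 2 / (64 * T)))⁻¹ ≤ M * (1 + x ^ 2) ^ (-a)
        rw [Real.rpow_neg (by positivity : (0:ℝ) ≤ 1 + x ^ 2), ← one_div, ← one_div, mul_one_div,
          div_le_div_iff₀ (Real.exp_pos _) (weight_pos a x)]
        calc 1 * (1 + x ^ 2) ^ a = (1 + x ^ 2) ^ a := one_mul _
          _ ≤ M * Real.exp (x ^ 2 / (64 * T)) := hMx x
      have hwz1 : w z ≤ 1 := weight_le_one a z ha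
      have e16 : (0:ℝ) ≤ Real.exp (-(x - z) ^ 2 / (16 * t)) := (Real.exp_pos _).le
      calc Real.exp (-(x - z) ^ 2 / (8 * t)) * w z
          ≤ Real.exp (-(x - z) ^ 2 / (8 * t)) * 1 :=
            mul_le_mul_of_nonneg_left hwz1 (Real.exp_pos _).le
        _ = Real.exp (-(x - z) ^ 2 / (16 * t)) * Real.exp (-(x - z) ^ 2 / (16 * t)) := by
            rw [mul_one, hsplit]
        _ ≤ Real.exp (-(x - z) ^ 2 / (16 * t)) * (M * w x) := by
            apply mul_le_mul_of_nonneg_left _ e16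
            exact le_trans (le_trans hfar htle) hMw
        _ ≤ h z := by
            rw [hh]
            have : (0:ℝ) ≤ (4:ℝ) ^ a * Real.exp (-(x - z) ^ 2 / (8 * t)) * w x := by
              have := (hwpos x).le; positivity
            nlinarith [this]
  have hmono : ∫ z : ℝ, Real.exp (-(x - z) ^ 2 / (8 * t)) * w z ≤ ∫ z, h z := by
    apply integral_mono_of_nonneg
    · exact Filter.Eventually.of_forall fun z => by
        have := (hwpos z).le; positivity
    · exact hinth
    · exact Filter.Eventually.of_forall hpt
  refine hmono.trans ?_
  have hintval : ∫ z, h z =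
      ((4:ℝ) ^ a * Real.sqrt (Real.pi * (8 * t)) + M * Real.sqrt (Real.pi * (16 * t))) * w x := by
    rw [hh]
    rw [integral_mul_const, integral_add (hint8.const_mul _) (hint16.const_mul _),
      integral_const_mul, integral_const_mul,
      gauss_integral (8 * t) x (by positivity), gauss_integral (16 * t) x (by positivity)]
  rw [hintval]
  have e8 : Real.sqrt (Real.pi * (8 * t)) = Real.sqrt (8 * Real.pi) * Real.sqrt t := by
    rw [← Real.sqrt_mul (by positivity)]; ring_nf
  have e16 : Real.sqrt (Real.pi * (16 * t)) = Real.sqrt (16 * Real.pi) * Real.sqrt t := by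
    rw [← Real.sqrt_mul (by positivity)]; ring_nf
  rw [e8, e16]
  have : (0:ℝ) ≤ w x := (hwpos x).le
  apply le_of_eq; ring

lemma abs_mul_exp_le (s y : ℝ) (hs : 0 < s) :
    |y| * Real.exp (-y ^ 2 / (8 * s)) ≤ Real.sqrt 8 * Real.sqrt s := by
  have h8s : (0:ℝ) < 8 * s := by positivity
  have hsq : Real.sqrt (8 * s) * Real.sqrt (8 * s) = 8 * s := Real.mul_self_sqrt h8s.le
  have hsplit : Real.sqrt 8 * Real.sqrt s = Real.sqrt (8 * s) := (Real.sqrt_mul (by norm_num) s).symm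
  rw [hsplit]
  by_cases hy : y ^ 2 ≤ 8 * s
  · have h1 : |y| ≤ Real.sqrt (8 * s) := by
      rw [← Real.sqrt_sq_eq_abs]; exact Real.sqrt_le_sqrt hy
    have h2 : Real.exp (-y ^ 2 / (8 * s)) ≤ 1 := by
      rw [Real.exp_le_one_iff]
      have : (0:ℝ) ≤ y ^ 2 / (8 * s) := by positivity
      rw [neg_div]; linarith
    calc |y| * Real.exp (-y ^ 2 / (8 * s)) ≤ |y| * 1 :=
          mul_le_mul_of_nonneg_left h2 (abs_nonneg y)
      _ = |y| := mul_one _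
      _ ≤ _ := h1
  · push_neg at hy
    have hy0 : 0 < |y| := by
      rcases eq_or_ne y 0 with h | h
      · exfalso; rw [h] at hy; simp at hy; linarith
      · exact abs_pos.mpr h
    have hy2 : (0:ℝ) < y ^ 2 := by nlinarith
    have hu : (0:ℝ) < y ^ 2 / (8 * s) := by positivity
    have hexp : Real.exp (-y ^ 2 / (8 * s)) ≤ (8 * s) / y ^ 2 := by
      rw [neg_div, Real.exp_neg]
      have h1 : y ^ 2 / (8 * s) ≤ Real.exp (y ^ 2 / (8 * s)) := by
        have := Real.add_one_le_exp (y ^ 2 / (8 * s)); linarith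
      have h2 : (Real.exp (y ^ 2 / (8 * s)))⁻¹ ≤ (y ^ 2 / (8 * s))⁻¹ :=
        inv_anti₀ hu h1
      rwa [inv_div] at h2
    have habs : Real.sqrt (8 * s) ≤ |y| := by
      rw [← Real.sqrt_sq_eq_abs]; exact Real.sqrt_le_sqrt hy.le
    have hyy : |y| * |y| = y ^ 2 := by rw [← abs_mul, ← sq, abs_sq]
    calc |y| * Real.exp (-y ^ 2 / (8 * s)) ≤ |y| * ((8 * s) / y ^ 2) :=
          mul_le_mul_of_nonneg_left hexp (abs_nonneg y)
      _ = (8 * s) / |y| := by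
          rw [mul_div_assoc', div_eq_div_iff hy2.ne' hy0.ne', ← hyy]; ring
      _ ≤ (8 * s) / Real.sqrt (8 * s) := by
          apply div_le_div_of_nonneg_left h8s.le (Real.sqrt_pos.mpr h8s) habs
      _ = Real.sqrt (8 * s) := by
          rw [eq_comm, eq_div_iff (Real.sqrt_pos.mpr h8s).ne', hsq]


lemma final_scalar (s8 C K : ℝ) (h8 : s8 ≤ 4) (hC : 0 ≤ C) (hK : 0 ≤ K) :
    s8 / 2 * C * K ≤ 2 * (C + 1) * K := by
  nlinarith [mul_nonneg (mul_nonneg hC hK) (show (0:ℝ) ≤ 4 - s8 by linarith),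
    mul_nonneg hC hK, hK]

/-- The one-dimensional heat kernel `H_t(x) = (4πt)^(-1/2) exp(-x²/(4t))`. -/
noncomputable def heatKernel (t x : ℝ) : ℝ :=
  (4 * Real.pi * t) ^ (-(1 : ℝ) / 2) * Real.exp (-x ^ 2 / (4 * t))

/-- Spatial decay for the heat semigroup: given `a > 0`, `T > 0` and `C₀`, there is a
constant `C₁ > 0` depending only on `a`, `T`, `C₀` such that for every continuously
differentiable `f` with bounded derivative satisfying `(1+x²)^a |f(x)| ≤ C₀` for all `x`,
one has for all `0 < t ≤ T` and all `x`:
`|(H_t * f)(x)| ≤ C₁ (1+x²)^(-a)` and `|(H_t * f')(x)| ≤ C₁ t^(-1/2) (1+x²)^(-a)`. -/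
theorem heatKernel_weighted_bounds (a T C₀ : ℝ) (ha : 0 < a) (hT : 0 < T) :
    ∃ C₁ : ℝ, 0 < C₁ ∧
      ∀ f : ℝ → ℝ, ContDiff ℝ 1 f →
        (∃ B : ℝ, ∀ x : ℝ, |deriv f x| ≤ B) →
        (∀ x : ℝ, (1 + x ^ 2) ^ a * |f x| ≤ C₀) →
        ∀ t x : ℝ, 0 < t → t ≤ T →
          |∫ z : ℝ, heatKernel t (x - z) * f z| ≤ C₁ / (1 + x ^ 2) ^ a ∧
            |∫ z : ℝ, heatKernel t (x - z) * deriv f z| ≤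
              C₁ / (Real.sqrt t * (1 + x ^ 2) ^ a) := by
  obtain ⟨M, hM1, hMx⟩ := aux_poly_exp a T ha hT
  set K : ℝ := (4:ℝ) ^ a * Real.sqrt (8 * Real.pi) + M * Real.sqrt (16 * Real.pi) with hK
  have hpi := Real.pi_pos
  have hKpos : 0 < K :=
    add_pos (mul_pos (by positivity) (Real.sqrt_pos.mpr (by positivity)))
      (mul_pos (by linarith) (Real.sqrt_pos.mpr (by positivity)))
  set C' : ℝ := max C₀ 0 with hC'
  have hC'0 : 0 ≤ C' := le_max_right _ _
  refine ⟨2 * (C' + 1) * K, by nlinarith, ?_⟩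
  rintro f hf ⟨B, hB⟩ hC₀ t x ht htT
  have hB0 : 0 ≤ B := le_trans (abs_nonneg _) (hB 0)
  -- bound on f
  have hfb : ∀ z : ℝ, |f z| ≤ C' * (1 + z ^ 2) ^ (-a) := by
    intro z
    have hpw := weight_pos a z
    have hle : |f z| * (1 + z ^ 2) ^ a ≤ C' := by
      have h0 : (1 + z ^ 2) ^ a * |f z| ≤ C' := le_trans (hC₀ z) (le_max_left C₀ 0)
      rw [mul_comm]; exact h0
    have h2 : |f z| ≤ C' / (1 + z ^ 2) ^ a := (le_div_iff₀ hpw).mpr hle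
    rwa [div_eq_mul_inv, ← Real.rpow_neg (by positivity)] at h2
  set st : ℝ := Real.sqrt t with hstdef
  have hst : 0 < st := Real.sqrt_pos.mpr ht
  have hstt : st * st = t := Real.mul_self_sqrt ht.le
  set c0 : ℝ := (4 * Real.pi * t) ^ (-(1:ℝ) / 2) with hc0def
  have hc0pos : 0 < c0 := by rw [hc0def]; positivity
  have hc0le : c0 ≤ st⁻¹ := by
    rw [hc0def, show (-(1:ℝ) / 2) = -(1/2) by norm_num,
      Real.rpow_neg (by positivity), ← Real.sqrt_eq_rpow]
    apply inv_anti₀ hst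
    apply Real.sqrt_le_sqrt
    nlinarith [mul_pos ht (show (0:ℝ) < Real.pi - 1 by have := Real.pi_gt_three; linarith)]
  have hkernel : ∀ y : ℝ, heatKernel t y = c0 * Real.exp (-y ^ 2 / (4 * t)) := fun y => rfl
  have hker_nonneg : ∀ y : ℝ, 0 ≤ heatKernel t y := fun y => by
    rw [hkernel y]; positivity
  have hexp48 : ∀ y : ℝ, Real.exp (-y ^ 2 / (4 * t)) ≤ Real.exp (-y ^ 2 / (8 * t)) := by
    intro y
    apply Real.exp_le_exp.mpr
    rw [neg_div, neg_div, neg_le_neg_iff]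
    exact div_le_div_of_nonneg_left (sq_nonneg y) (by positivity) (by linarith)
  have hsplit48 : ∀ y : ℝ, Real.exp (-y ^ 2 / (4 * t)) =
      Real.exp (-y ^ 2 / (8 * t)) * Real.exp (-y ^ 2 / (8 * t)) := by
    intro y
    rw [← Real.exp_add]; congr 1; field_simp; ring
  have hwc : Continuous (fun z : ℝ => (1 + z ^ 2 : ℝ) ^ (-a)) :=
    (continuous_const.add (continuous_pow 2)).rpow_const
      (fun z => Or.inl (by have h : (0:ℝ) < 1 + z ^ 2 := (by positivity); exact h.ne'))
  have hint8 := gauss_integrable (8 * t) x (by positivity)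
  have hint4 := gauss_integrable (4 * t) x (by positivity)
  -- integrability of the weighted gaussian majorant
  have hIw : Integrable (fun z : ℝ =>
      Real.exp (-(x - z) ^ 2 / (8 * t)) * (1 + z ^ 2) ^ (-a)) := by
    apply hint8.mono
    · exact ((Real.continuous_exp.comp (by fun_prop)).mul hwc).aestronglyMeasurable
    · refine Filter.Eventually.of_forall fun z => ?_
      have h1 : (0:ℝ) < (1 + z ^ 2) ^ (-a) := weight_pos _ _
      have h2 := weight_le_one a z ha
      have h3 := Real.exp_pos (-(x - z) ^ 2 / (8 * t))
      simp only [Real.norm_eq_abs, abs_of_pos (mul_pos h3 h1), abs_of_pos h3]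
      nlinarith
  have hJ := aux_key a T M ha hT hM1 hMx t x ht htT
  set w : ℝ → ℝ := fun y : ℝ => (1 + y ^ 2 : ℝ) ^ (-a) with hw
  have hwpos : ∀ y, 0 < w y := fun y => weight_pos _ _
  have hJ' : (∫ z : ℝ, Real.exp (-(x - z) ^ 2 / (8 * t)) * w z) ≤ K * st * w x := by
    simp only [hw, hK, hstdef]; exact hJ
  clear hJ
  have hrhs1 : (2 * (C' + 1) * K) / (1 + x ^ 2) ^ a = (2 * (C' + 1) * K) * w x := by
    simp only [hw]
    rw [Real.rpow_neg (by positivity), div_eq_mul_inv]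
  -- Part 1
  have part1 : |∫ z : ℝ, heatKernel t (x - z) * f z| ≤ (2 * (C' + 1) * K) / (1 + x ^ 2) ^ a := by
    have habs : |∫ z : ℝ, heatKernel t (x - z) * f z| ≤
        ∫ z : ℝ, |heatKernel t (x - z) * f z| := by
      have := norm_integral_le_integral_norm (μ := volume)
        (fun z : ℝ => heatKernel t (x - z) * f z)
      simpa only [Real.norm_eq_abs] using this
    have hmono : ∫ z : ℝ, |heatKernel t (x - z) * f z| ≤
        ∫ z : ℝ, (st⁻¹ * C') * (Real.exp (-(x - z) ^ 2 / (8 * t)) * w z) := by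
      apply integral_mono_of_nonneg
      · exact Filter.Eventually.of_forall fun z => abs_nonneg _
      · exact hIw.const_mul _
      · refine Filter.Eventually.of_forall fun z => ?_
        have hH : heatKernel t (x - z) ≤ st⁻¹ * Real.exp (-(x - z) ^ 2 / (8 * t)) := by
          rw [hkernel]
          exact mul_le_mul hc0le (hexp48 _) (Real.exp_pos _).le (by positivity)
        calc |heatKernel t (x - z) * f z| = heatKernel t (x - z) * |f z| := by
              rw [abs_mul, abs_of_nonneg (hker_nonneg _)]
          _ ≤ (st⁻¹ * Real.exp (-(x - z) ^ 2 / (8 * t))) * (C' * w z) :=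
              mul_le_mul hH (hfb z) (abs_nonneg _)
                (by positivity)
          _ = (st⁻¹ * C') * (Real.exp (-(x - z) ^ 2 / (8 * t)) * w z) := by ring
    have hval : ∫ z : ℝ, (st⁻¹ * C') * (Real.exp (-(x - z) ^ 2 / (8 * t)) * w z) =
        (st⁻¹ * C') * ∫ z : ℝ, Real.exp (-(x - z) ^ 2 / (8 * t)) * w z :=
      integral_const_mul _ _
    rw [hrhs1]
    refine (habs.trans (hmono.trans (le_of_eq hval))).trans ?_
    calc (st⁻¹ * C') * ∫ z : ℝ, Real.exp (-(x - z) ^ 2 / (8 * t)) * w z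
        ≤ (st⁻¹ * C') * (K * st * w x) :=
          mul_le_mul_of_nonneg_left hJ' (by positivity)
      _ = C' * K * w x := by field_simp
      _ ≤ (2 * (C' + 1) * K) * w x := by
          apply mul_le_mul_of_nonneg_right _ (hwpos x).le
          nlinarith [hKpos.le, mul_nonneg hC'0 hKpos.le]
  -- Part 2 : integration by parts
  set u : ℝ → ℝ := fun z => heatKernel t (x - z) with hu_def
  set u' : ℝ → ℝ := fun z => heatKernel t (x - z) * ((x - z) / (2 * t)) with hu'_def
  have hu : ∀ z : ℝ, HasDerivAt u (u' z) z := by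
    intro z
    have h1 : HasDerivAt (fun z : ℝ => x - z) (-1) z := (hasDerivAt_id z).const_sub x
    have h3 := ((h1.pow 2).neg).div_const (4 * t)
    have h5 := h3.exp.const_mul c0
    have hfun : u = fun z : ℝ => c0 * Real.exp (-(x - z) ^ 2 / (4 * t)) := rfl
    rw [hfun]
    refine h5.congr_deriv ?_; symm
    rw [hu'_def]
    show heatKernel t (x - z) * ((x - z) / (2 * t)) = _
    rw [hkernel]
    simp only [Pi.neg_apply, Pi.pow_apply]
    push_cast
    ring
  have hv : ∀ z : ℝ, HasDerivAt f (deriv f z) z := fun z =>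
    (hf.differentiable one_ne_zero z).hasDerivAt
  have hucont : Continuous u := by
    have : u = fun z : ℝ => c0 * Real.exp (-(x - z) ^ 2 / (4 * t)) := rfl
    rw [this]; fun_prop
  have hu'cont : Continuous u' := by
    apply hucont.mul; fun_prop
  have hfcont : Continuous f := hf.continuous
  have hf'cont : Continuous (deriv f) := hf.continuous_deriv le_rfl
  have hu_bound : ∀ z : ℝ, u z ≤ st⁻¹ * Real.exp (-(x - z) ^ 2 / (4 * t)) := by
    intro z
    rw [hu_def]
    show heatKernel t (x - z) ≤ _
    rw [hkernel]
    exact mul_le_mul_of_nonneg_right hc0le (Real.exp_pos _).le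
  have hu'_bound : ∀ z : ℝ, |u' z| ≤
      (st⁻¹ * (Real.sqrt 8 * st / (2 * t))) * Real.exp (-(x - z) ^ 2 / (8 * t)) := by
    intro z
    have hme := abs_mul_exp_le t (x - z) ht
    have e8pos := Real.exp_pos (-(x - z) ^ 2 / (8 * t))
    calc |u' z| = heatKernel t (x - z) * (|x - z| / (2 * t)) := by
          rw [hu'_def]
          show |heatKernel t (x - z) * ((x - z) / (2 * t))| = _
          rw [abs_mul, abs_of_nonneg (hker_nonneg _), abs_div, abs_of_pos (by positivity : (0:ℝ) < 2 * t)]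
      _ = c0 * (Real.exp (-(x - z) ^ 2 / (8 * t)) * Real.exp (-(x - z) ^ 2 / (8 * t))) *
            (|x - z| / (2 * t)) := by rw [hkernel, hsplit48]
      _ = c0 * Real.exp (-(x - z) ^ 2 / (8 * t)) *
            ((|x - z| * Real.exp (-(x - z) ^ 2 / (8 * t))) / (2 * t)) := by ring
      _ ≤ st⁻¹ * Real.exp (-(x - z) ^ 2 / (8 * t)) * ((Real.sqrt 8 * st) / (2 * t)) := by
          apply mul_le_mul
          · exact mul_le_mul_of_nonneg_right hc0le e8pos.le
          · exact (div_le_div_iff_of_pos_right (by positivity)).mpr hme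
          · positivity
          · positivity
      _ = (st⁻¹ * (Real.sqrt 8 * st / (2 * t))) * Real.exp (-(x - z) ^ 2 / (8 * t)) := by ring
  -- integrability hypotheses for integration by parts
  have huv' : Integrable (u * deriv f) := by
    apply (hint4.const_mul (st⁻¹ * B)).mono
      ((hucont.mul hf'cont).aestronglyMeasurable)
    refine Filter.Eventually.of_forall fun z => ?_
    have h1 := hu_bound z
    have h2 := hB z
    have h3 : (0:ℝ) ≤ u z := hker_nonneg _
    have e4pos := Real.exp_pos (-(x - z) ^ 2 / (4 * t))
    simp only [Real.norm_eq_abs, Pi.mul_apply, abs_mul, abs_of_nonneg h3]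
    rw [abs_of_nonneg (by positivity : (0:ℝ) ≤ st⁻¹), abs_of_nonneg hB0,
      abs_of_nonneg e4pos.le]
    calc u z * |deriv f z| ≤ (st⁻¹ * Real.exp (-(x - z) ^ 2 / (4 * t))) * B :=
          mul_le_mul h1 h2 (abs_nonneg _) (by positivity)
      _ = st⁻¹ * B * Real.exp (-(x - z) ^ 2 / (4 * t)) := by ring
  have hu'v : Integrable (u' * f) := by
    apply (hint8.const_mul ((st⁻¹ * (Real.sqrt 8 * st / (2 * t))) * C')).mono
      ((hu'cont.mul hfcont).aestronglyMeasurable)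
    refine Filter.Eventually.of_forall fun z => ?_
    have h1 := hu'_bound z
    have h2 := (hfb z).trans (mul_le_of_le_one_right hC'0 (weight_le_one a z ha))
    have e8pos := Real.exp_pos (-(x - z) ^ 2 / (8 * t))
    simp only [Real.norm_eq_abs, Pi.mul_apply, abs_mul]
    rw [abs_of_nonneg (by positivity : (0:ℝ) ≤ st⁻¹),
      abs_of_nonneg (by positivity : (0:ℝ) ≤ Real.sqrt 8 * st / (2 * t)),
      abs_of_nonneg hC'0, abs_of_nonneg e8pos.le]
    calc |u' z| * |f z| ≤
        ((st⁻¹ * (Real.sqrt 8 * st / (2 * t))) * Real.exp (-(x - z) ^ 2 / (8 * t))) * C' :=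
          mul_le_mul h1 h2 (abs_nonneg _) (by positivity)
      _ = st⁻¹ * (Real.sqrt 8 * st / (2 * t)) * C' * Real.exp (-(x - z) ^ 2 / (8 * t)) := by ring
  have huv : Integrable (u * f) := by
    apply (hint4.const_mul (st⁻¹ * C')).mono
      ((hucont.mul hfcont).aestronglyMeasurable)
    refine Filter.Eventually.of_forall fun z => ?_
    have h1 := hu_bound z
    have h2 := (hfb z).trans (mul_le_of_le_one_right hC'0 (weight_le_one a z ha))
    have h3 : (0:ℝ) ≤ u z := hker_nonneg _
    have e4pos := Real.exp_pos (-(x - z) ^ 2 / (4 * t))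
    simp only [Real.norm_eq_abs, Pi.mul_apply, abs_mul, abs_of_nonneg h3]
    rw [abs_of_nonneg (by positivity : (0:ℝ) ≤ st⁻¹), abs_of_nonneg hC'0,
      abs_of_nonneg e4pos.le]
    calc u z * |f z| ≤ (st⁻¹ * Real.exp (-(x - z) ^ 2 / (4 * t))) * C' :=
          mul_le_mul h1 h2 (abs_nonneg _) (by positivity)
      _ = st⁻¹ * C' * Real.exp (-(x - z) ^ 2 / (4 * t)) := by ring
  have hIBP : ∫ z : ℝ, u z * deriv f z = - ∫ z : ℝ, u' z * f z :=
    integral_mul_deriv_eq_deriv_mul_of_integrable (fun z _ => hu z) (fun z _ => hv z) huv' hu'v huv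
  have part2 : |∫ z : ℝ, heatKernel t (x - z) * deriv f z| ≤
      (2 * (C' + 1) * K) / (st * (1 + x ^ 2) ^ a) := by
    have hIBP' : (∫ z : ℝ, heatKernel t (x - z) * deriv f z) = - ∫ z : ℝ, u' z * f z := hIBP
    rw [hIBP', abs_neg]
    have habs : |∫ z : ℝ, u' z * f z| ≤ ∫ z : ℝ, |u' z * f z| := by
      have := norm_integral_le_integral_norm (μ := volume) (fun z : ℝ => u' z * f z)
      simpa only [Real.norm_eq_abs] using this
    set c3 : ℝ := (st⁻¹ * (Real.sqrt 8 * st / (2 * t))) * C' with hc3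
    have hc3nn : 0 ≤ c3 := by positivity
    have hmono : ∫ z : ℝ, |u' z * f z| ≤
        ∫ z : ℝ, c3 * (Real.exp (-(x - z) ^ 2 / (8 * t)) * w z) := by
      apply integral_mono_of_nonneg
      · exact Filter.Eventually.of_forall fun z => abs_nonneg _
      · exact hIw.const_mul _
      · refine Filter.Eventually.of_forall fun z => ?_
        calc |u' z * f z| = |u' z| * |f z| := abs_mul _ _
          _ ≤ ((st⁻¹ * (Real.sqrt 8 * st / (2 * t))) * Real.exp (-(x - z) ^ 2 / (8 * t))) *
                (C' * w z) :=
              mul_le_mul (hu'_bound z) (hfb z) (abs_nonneg _) (by positivity)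
          _ = c3 * (Real.exp (-(x - z) ^ 2 / (8 * t)) * w z) := by rw [hc3]; ring
    have hval : ∫ z : ℝ, c3 * (Real.exp (-(x - z) ^ 2 / (8 * t)) * w z) =
        c3 * ∫ z : ℝ, Real.exp (-(x - z) ^ 2 / (8 * t)) * w z := integral_const_mul _ _
    refine (habs.trans (hmono.trans (le_of_eq hval))).trans ?_
    have hb2 : c3 * (K * st * w x) ≤ (2 * (C' + 1) * K) / (st * (1 + x ^ 2) ^ a) := by
      have hsqrt8 : Real.sqrt 8 ≤ 4 := by
        rw [show (4:ℝ) = Real.sqrt 16 by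
          rw [show (16:ℝ) = 4 ^ 2 by norm_num, Real.sqrt_sq (by norm_num)]]
        exact Real.sqrt_le_sqrt (by norm_num)
      have hrhs : (2 * (C' + 1) * K) / (st * (1 + x ^ 2) ^ a) =
          ((2 * (C' + 1) * K) * st⁻¹) * w x := by
        simp only [hw]
        rw [Real.rpow_neg (by positivity), div_eq_mul_inv, mul_inv]
        ring
      rw [hrhs, hc3]
      have hlhs : (st⁻¹ * (Real.sqrt 8 * st / (2 * t))) * C' * (K * st * w x) =
          (Real.sqrt 8 / 2 * C' * K * st⁻¹) * w x := by
        rw [← hstt]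
        field_simp
      rw [hlhs]
      apply mul_le_mul_of_nonneg_right _ (hwpos x).le
      apply mul_le_mul_of_nonneg_right _ (by positivity : (0:ℝ) ≤ st⁻¹)
      exact final_scalar _ _ _ hsqrt8 hC'0 hKpos.le
    calc c3 * ∫ z : ℝ, Real.exp (-(x - z) ^ 2 / (8 * t)) * w z
        ≤ c3 * (K * st * w x) := mul_le_mul_of_nonneg_left hJ' hc3nn
      _ ≤ _ := hb2
  exact ⟨part1, part2⟩
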